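/- There is no non-consecutive by king's move Latin square of order 5; i.e., no 5×5 Latin square in which every pair of cells adjacent orthogonally or diagonally contain values differing by exactly 1 is forbidden. -/
import Mathlib


/-- An `n × n` Latin square with entries in `{1, …, n}`. -/
def latin (n : ℕ) (M : Fin n → Fin n → ℕ) : Prop :=
  (∀ i j, M i j ∈ Finset.Icc 1 n) ∧
  (∀ i, Function.Injective fun j => M i j) ∧
  (∀ j, Function.Injective fun i => M i j)

/-- Two cells are orthogonally adjacent. -/
def orthAdj (n : ℕ) (p q : Fin n × Fin n) : Prop :=
  (p.1 = q.1 ∧ (p.2.val + 1 = q.2.val ∨ q.2.val + 1 = p.2.val)) ∨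
  (p.2 = q.2 ∧ (p.1.val + 1 = q.1.val ∨ q.1.val + 1 = p.1.val))

/-- Two cells are a king's move apart (orthogonally or diagonally adjacent). -/
def kingAdj (n : ℕ) (p q : Fin n × Fin n) : Prop :=
  p ≠ q ∧ ((p.1.val : ℤ) - q.1.val).natAbs ≤ 1 ∧ ((p.2.val : ℤ) - q.2.val).natAbs ≤ 1

/-- Two cells are a knight's move apart. -/
def knightAdj (n : ℕ) (p q : Fin n × Fin n) : Prop :=
  (((p.1.val : ℤ) - q.1.val).natAbs = 1 ∧ ((p.2.val : ℤ) - q.2.val).natAbs = 2) ∨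
  (((p.1.val : ℤ) - q.1.val).natAbs = 2 ∧ ((p.2.val : ℤ) - q.2.val).natAbs = 1)

/-- Two cells are a bishop's move apart: on a common diagonal, at nonzero distance. -/
def bishopMove (n : ℕ) (p q : Fin n × Fin n) : Prop :=
  ((p.1.val : ℤ) - q.1.val).natAbs = ((p.2.val : ℤ) - q.2.val).natAbs ∧ p.1 ≠ q.1

/-- Two cells are orthogonally adjacent on the torus (wrapping around). -/
def torAdj (n : ℕ) (p q : Fin n × Fin n) : Prop :=
  p ≠ q ∧
    ((p.1 = q.1 ∧ ((p.2.val + 1) % n = q.2.val ∨ (q.2.val + 1) % n = p.2.val)) ∨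
     (p.2 = q.2 ∧ ((p.1.val + 1) % n = q.1.val ∨ (q.1.val + 1) % n = p.1.val)))

/-- Two values differ by exactly 1. -/
def diffOne (a b : ℕ) : Prop := ((a : ℤ) - (b : ℤ)).natAbs = 1


set_option maxRecDepth 100000 in
set_option maxHeartbeats 4000000 in
/-- Key finite check: no two "compatible" adjacent rows exist (as permutations of `Fin 5`). -/
lemma key5 : ¬ ∃ σ τ : Equiv.Perm (Fin 5),
    (∀ j : Fin 5, σ j ≠ τ j) ∧
    (∀ j k : Fin 5, ((j.val : ℤ) - k.val).natAbs ≤ 1 →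
      ¬ ((σ j).val = (τ k).val + 1 ∨ (τ k).val = (σ j).val + 1)) ∧
    (∀ j k : Fin 5, j.val + 1 = k.val →
      ¬ ((σ j).val = (σ k).val + 1 ∨ (σ k).val = (σ j).val + 1)) ∧
    (∀ j k : Fin 5, j.val + 1 = k.val →
      ¬ ((τ j).val = (τ k).val + 1 ∨ (τ k).val = (τ j).val + 1)) := by decide

/-- There is no non-consecutive by king's move Latin square of order 5. -/
theorem stmt5 :
    ¬ ∃ M : Fin 5 → Fin 5 → ℕ, latin 5 M ∧
      ∀ p q : Fin 5 × Fin 5, kingAdj 5 p q → ¬ diffOne (M p.1 p.2) (M q.1 q.2) := by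
  rintro ⟨M, ⟨hmem, hrow, hcol⟩, hking⟩
  have hb : ∀ i j, 1 ≤ M i j ∧ M i j ≤ 5 := by
    intro i j; have := hmem i j; simpa [Finset.mem_Icc] using this
  have hf : ∀ i j, M i j - 1 < 5 := by intro i j; have := hb i j; omega
  set f : Fin 5 → Fin 5 → Fin 5 := fun i j => ⟨M i j - 1, hf i j⟩ with hfdef
  have hinj : ∀ i, Function.Injective (f i) := by
    intro i j k h
    apply hrow i
    have h1 := hb i j; have h2 := hb i k
    have h3 : M i j - 1 = M i k - 1 := congrArg Fin.val h
    simp only; omega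
  set σ := Equiv.ofBijective (f 0) (Finite.injective_iff_bijective.mp (hinj 0)) with hσdef
  set τ := Equiv.ofBijective (f 1) (Finite.injective_iff_bijective.mp (hinj 1)) with hτdef
  have hs : ∀ j, M 0 j = (σ j).val + 1 := by
    intro j; have := hb 0 j
    show M 0 j = (f 0 j).val + 1
    simp [hfdef]; omega
  have ht : ∀ j, M 1 j = (τ j).val + 1 := by
    intro j; have := hb 1 j
    show M 1 j = (f 1 j).val + 1
    simp [hfdef]; omega
  apply key5
  refine ⟨σ, τ, ?_, ?_, ?_, ?_⟩
  · intro j h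
    have h01 : M 0 j = M 1 j := by
      have := congrArg Fin.val h
      have h1 := hs j; have h2 := ht j
      omega
    have : (0 : Fin 5) = 1 := hcol j h01
    exact absurd this (by decide)
  · intro j k hjk h
    have hkadj : kingAdj 5 ((0 : Fin 5), j) ((1 : Fin 5), k) :=
      ⟨fun h' => by simpa using congrArg (fun p => p.1.val) h', by norm_num, hjk⟩
    apply hking _ _ hkadj
    show diffOne (M 0 j) (M 1 k)
    rw [hs j, ht k]; unfold diffOne; omega
  · intro j k hjk h
    have hne : j ≠ k := by intro h'; subst h'; omega
    have hkadj : kingAdj 5 ((0 : Fin 5), j) ((0 : Fin 5), k) :=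
      ⟨fun h' => hne (congrArg Prod.snd h'), by norm_num, by simp only; omega⟩
    apply hking _ _ hkadj
    show diffOne (M 0 j) (M 0 k)
    rw [hs j, hs k]; unfold diffOne; omega
  · intro j k hjk h
    have hne : j ≠ k := by intro h'; subst h'; omega
    have hkadj : kingAdj 5 ((1 : Fin 5), j) ((1 : Fin 5), k) :=
      ⟨fun h' => hne (congrArg Prod.snd h'), by norm_num, by simp only; omega⟩
    apply hking _ _ hkadj
    show diffOne (M 1 j) (M 1 k)
    rw [ht j, ht k]; unfold diffOne; omega
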